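/- Suppose G(λ) < ∞. Then the conservation equation ∑_{k∈K} μ_k ψ_k = M(K) − Λ(I) holds, where ψ_k = ψ · ∑_{x : x_i = 0 for all i ∈ I_k} Φ(x) λ^x is the stationary probability that server k is idle. In particular, Λ(I) < M(K). -/

import Mathlib

open scoped BigOperators

/-- The balance function of balanced fairness: `Φ(0) = 1` and
`Φ(x) = (∑_{i : x_i > 0} Φ(x - e_i)) / M(⋃_{i : x_i > 0} 𝒦_i)`. -/
noncomputable def Phi {I K : Type} [Fintype I] [DecidableEq I] [DecidableEq K]
    (μ : K → ℝ) (Ka : I → Finset K) (x : I → ℕ) : ℝ :=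
  if x = fun _ => 0 then 1
  else (∑ i ∈ (Finset.univ.filter (fun i => 0 < x i)).attach,
      Phi μ Ka (Function.update x i.1 (x i.1 - 1))) /
    (∑ k ∈ (Finset.univ.filter (fun i => 0 < x i)).biUnion Ka, μ k)
termination_by ∑ i, x i
decreasing_by
  have hi := i.2
  simp only [Finset.mem_filter] at hi
  apply Finset.sum_lt_sum
  · intro j _
    rcases eq_or_ne j i.1 with rfl | h
    · simp [Function.update_self]
    · rw [Function.update_of_ne h]
  · exact ⟨i.1, Finset.mem_univ i.1, by simp [Function.update_self]; omega⟩


private lemma sum_update_lt {I : Type} [Fintype I] [DecidableEq I]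
    (x : I → ℕ) (i : I) (hi : 0 < x i) :
    ∑ j, Function.update x i (x i - 1) j < ∑ j, x j := by
  apply Finset.sum_lt_sum
  · intro j _
    rcases eq_or_ne j i with rfl | h
    · simp [Function.update_self]
    · rw [Function.update_of_ne h]
  · exact ⟨i, Finset.mem_univ i, by simp [Function.update_self]; omega⟩

private lemma Phi_nonneg {I K : Type} [Fintype I] [DecidableEq I] [DecidableEq K]
    (μ : K → ℝ) (hμ : ∀ k, 0 ≤ μ k) (Ka : I → Finset K) (x : I → ℕ) : 0 ≤ Phi μ Ka x := by
  have key : ∀ n (x : I → ℕ), ∑ i, x i = n → 0 ≤ Phi μ Ka x := by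
    intro n
    induction n using Nat.strong_induction_on with
    | _ n ih =>
      intro x hn
      rw [Phi]
      split
      · norm_num
      · refine div_nonneg (Finset.sum_nonneg fun i _ => ?_) (Finset.sum_nonneg fun k _ => hμ k)
        have hi := i.2; simp only [Finset.mem_filter, Finset.mem_univ, true_and] at hi
        exact ih _ (hn ▸ sum_update_lt x i.1 hi) _ rfl
  exact key _ x rfl

private lemma Phi_zero {I K : Type} [Fintype I] [DecidableEq I] [DecidableEq K]
    (μ : K → ℝ) (Ka : I → Finset K) : Phi μ Ka (fun _ => 0) = 1 := by
  rw [Phi]; simp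

private lemma Mden_pos {I K : Type} [Fintype I] [DecidableEq I] [DecidableEq K]
    (μ : K → ℝ) (hμ : ∀ k, 0 < μ k) (Ka : I → Finset K) (hKa : ∀ i, (Ka i).Nonempty)
    (x : I → ℕ) (hx : x ≠ fun _ => 0) :
    0 < ∑ k ∈ (Finset.univ.filter (fun i => 0 < x i)).biUnion Ka, μ k := by
  obtain ⟨i, hi⟩ := Function.ne_iff.mp hx
  obtain ⟨k, hk⟩ := hKa i
  refine Finset.sum_pos (fun k _ => hμ k) ⟨k, Finset.mem_biUnion.mpr ⟨i, ?_, hk⟩⟩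
  simp only [Finset.mem_filter, Finset.mem_univ, true_and]; omega

private lemma Phi_mul {I K : Type} [Fintype I] [DecidableEq I] [DecidableEq K]
    (μ : K → ℝ) (hμ : ∀ k, 0 < μ k) (Ka : I → Finset K) (hKa : ∀ i, (Ka i).Nonempty)
    (x : I → ℕ) (hx : x ≠ fun _ => 0) :
    Phi μ Ka x * (∑ k ∈ (Finset.univ.filter (fun i => 0 < x i)).biUnion Ka, μ k)
      = ∑ i ∈ (Finset.univ.filter (fun i => 0 < x i)).attach,
          Phi μ Ka (Function.update x i.1 (x i.1 - 1)) := by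
  rw [Phi, if_neg hx]
  exact div_mul_cancel₀ _ (ne_of_gt (Mden_pos μ hμ Ka hKa x hx))

private lemma prod_pow_update {I : Type} [Fintype I] [DecidableEq I]
    (lam : I → ℝ) (x : I → ℕ) (i : I) (hi : 0 < x i) :
    ∏ j, lam j ^ x j = lam i * ∏ j, lam j ^ (Function.update x i (x i - 1)) j := by
  rw [← Finset.mul_prod_erase Finset.univ (fun j => lam j ^ x j) (Finset.mem_univ i),
      ← Finset.mul_prod_erase Finset.univ
        (fun j => lam j ^ (Function.update x i (x i - 1)) j) (Finset.mem_univ i)]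
  have h1 : ∏ j ∈ Finset.univ.erase i, lam j ^ (Function.update x i (x i - 1)) j
      = ∏ j ∈ Finset.univ.erase i, lam j ^ x j :=
    Finset.prod_congr rfl fun j hj => by
      rw [Function.update_of_ne (Finset.ne_of_mem_erase hj)]
  rw [h1, Function.update_self, ← mul_assoc]
  congr 1
  conv_lhs => rw [show x i = (x i - 1) + 1 by omega]
  rw [pow_succ]; ring

/-- If `G(λ) < ∞`, the conservation equation
`∑_{k∈K} μ_k ψ_k = M(K) − Λ(I)` holds, where `ψ_k` is the stationary probability that
server `k` is idle; in particular `Λ(I) < M(K)`. -/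
theorem conservation_equation
    {I K : Type} [Fintype I] [DecidableEq I] [Nonempty I]
    [Fintype K] [DecidableEq K] [Nonempty K]
    (μ : K → ℝ) (hμ : ∀ k, 0 < μ k)
    (Ka : I → Finset K) (hKa : ∀ i, (Ka i).Nonempty) (hcov : ∀ k, ∃ i, k ∈ Ka i)
    (lam : I → ℝ) (hlam : ∀ i, 0 ≤ lam i)
    (hG : Summable (fun x : I → ℕ => Phi μ Ka x * ∏ i, lam i ^ x i)) :
    (∑ k, μ k *
        ((∑' x : I → ℕ, Phi μ Ka x * ∏ i, lam i ^ x i)⁻¹ *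
          ∑' x : {x : I → ℕ // ∀ i, k ∈ Ka i → x i = 0},
            Phi μ Ka x.1 * ∏ i, lam i ^ x.1 i) =
      (∑ k, μ k) - ∑ i, lam i) ∧
    (∑ i, lam i) < ∑ k, μ k := by
  classical
  set f : (I → ℕ) → ℝ := fun x => Phi μ Ka x * ∏ i, lam i ^ x i with hf
  have hf0 : ∀ x, 0 ≤ f x := fun x =>
    mul_nonneg (Phi_nonneg μ (fun k => (hμ k).le) Ka x)
      (Finset.prod_nonneg fun i _ => pow_nonneg (hlam i) _)
  have hfzero : f (fun _ => 0) = 1 := by simp [hf, Phi_zero]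
  set G : ℝ := ∑' x, f x with hGdef
  have hG1 : 1 ≤ G := hfzero ▸ Summable.le_tsum hG (fun _ => 0) (fun j _ => hf0 j)
  have hGpos : 0 < G := lt_of_lt_of_le one_pos hG1
  -- the idle sets
  set S : K → Set (I → ℕ) := fun k => {x | ∀ i, k ∈ Ka i → x i = 0} with hS
  set Gk : K → ℝ := fun k => ∑' x : S k, f x with hGk
  have hsub : ∀ k, Summable (fun x : S k => f x) := fun k => hG.subtype _
  have hsubc : ∀ k, Summable (fun x : ↥((S k)ᶜ) => f x.1) := fun k => hG.subtype _
  have hdecomp : ∀ k, Gk k + ∑' x : ↥(S k)ᶜ, f x = G := fun k =>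
    Summable.tsum_add_tsum_compl (hsub k) (hsubc k)
  -- membership characterization
  have hmem : ∀ (k : K) (x : I → ℕ),
      x ∈ (S k)ᶜ ↔ k ∈ (Finset.univ.filter (fun i => 0 < x i)).biUnion Ka := by
    intro k x
    simp only [hS, Set.mem_compl_iff, Set.mem_setOf_eq, not_forall, Finset.mem_biUnion,
      Finset.mem_filter, Finset.mem_univ, true_and]
    constructor
    · rintro ⟨i, hik, hxi⟩; exact ⟨i, Nat.pos_of_ne_zero hxi, hik⟩
    · rintro ⟨i, hxi, hik⟩; exact ⟨i, hik, by omega⟩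
  -- Step A: ∑ k, μ k * (G - Gk k) = ∑' x, f x * Mden x
  set Mden : (I → ℕ) → ℝ :=
    fun x => ∑ k ∈ (Finset.univ.filter (fun i => 0 < x i)).biUnion Ka, μ k with hMden
  have hindsum : ∀ k, Summable (fun x => μ k * ((S k)ᶜ).indicator f x) :=
    fun k => (hG.indicator _).mul_left _
  have stepA : ∑ k, μ k * (∑' x : ↥(S k)ᶜ, f x) = ∑' x, f x * Mden x := by
    have h1 : ∀ k : K, μ k * (∑' x : ↥(S k)ᶜ, f x)
        = ∑' x, μ k * ((S k)ᶜ).indicator f x := by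
      intro k
      rw [tsum_subtype ((S k)ᶜ) f, tsum_mul_left]
    rw [Finset.sum_congr rfl (fun k _ => h1 k),
      ← Summable.tsum_finsetSum (fun k _ => hindsum k)]
    refine tsum_congr fun x => ?_
    have h2 : ∀ k : K, μ k * ((S k)ᶜ).indicator f x
        = if k ∈ (Finset.univ.filter (fun i => 0 < x i)).biUnion Ka then μ k * f x else 0 := by
      intro k
      by_cases hk : x ∈ (S k)ᶜ
      · rw [Set.indicator_of_mem hk, if_pos ((hmem k x).mp hk)]
      · rw [Set.indicator_of_notMem hk, if_neg (fun h => hk ((hmem k x).mpr h)), mul_zero]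
    rw [Finset.sum_congr rfl (fun k _ => h2 k), Finset.sum_ite_mem,
      Finset.univ_inter, ← Finset.sum_mul, hMden]
    ring
  -- Step B: ∑' x, f x * Mden x = (∑ i, lam i) * G
  set H : I → (I → ℕ) → ℝ :=
    fun i x => if 0 < x i then lam i * f (Function.update x i (x i - 1)) else 0 with hH
  have hpoint : ∀ x, f x * Mden x = ∑ i, H i x := by
    intro x
    by_cases hx : x = fun _ => 0
    · subst hx
      have : Mden (fun _ => 0) = 0 := by
        simp [hMden]
      rw [this, mul_zero]
      symm
      refine Finset.sum_eq_zero fun i _ => ?_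
      simp [hH]
    · have key : f x * Mden x
          = ∑ i ∈ (Finset.univ.filter (fun i => 0 < x i)).attach,
              (Phi μ Ka (Function.update x i.1 (x i.1 - 1)) * ∏ j, lam j ^ x j) := by
        rw [hf]
        calc Phi μ Ka x * (∏ j, lam j ^ x j) * Mden x
            = (Phi μ Ka x * Mden x) * ∏ j, lam j ^ x j := by ring
          _ = _ := by rw [hMden, Phi_mul μ hμ Ka hKa x hx, Finset.sum_mul]
      rw [key, Finset.sum_attach _
        (fun i => Phi μ Ka (Function.update x i (x i - 1)) * ∏ j, lam j ^ x j),
        Finset.sum_filter]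
      refine Finset.sum_congr rfl fun i _ => ?_
      by_cases hxi : 0 < x i
      · rw [if_pos hxi]
        have hHix : H i x = lam i * f (Function.update x i (x i - 1)) := by
          simp [hH, hxi]
        rw [hHix]
        simp only [hf]
        rw [prod_pow_update lam x i hxi]
        ring
      · rw [if_neg hxi]
        symm
        simp [hH, hxi]
  -- the shift injection
  have hshift : ∀ i : I, Summable (H i) ∧ ∑' x, H i x = lam i * G := by
    intro i
    set ι : (I → ℕ) → (I → ℕ) := fun y => Function.update y i (y i + 1) with hι
    have hinj : Function.Injective ι := by
      intro y z h
      funext j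
      have hj := congrFun h j
      rcases eq_or_ne j i with rfl | hji
      · simp only [hι, Function.update_self] at hj; omega
      · simpa only [hι, Function.update_of_ne hji] using hj
    have hcomp : ∀ y, H i (ι y) = lam i * f y := by
      intro y
      have h1 : (ι y) i = y i + 1 := Function.update_self i (y i + 1) y
      have h2 : Function.update (ι y) i (y i + 1 - 1) = y := by
        simp only [Nat.add_sub_cancel, hι, Function.update_idem, Function.update_eq_self]
      have : H i (ι y) = if 0 < (ι y) i then lam i * f (Function.update (ι y) i ((ι y) i - 1)) else 0 := by
        simp [hH]
      rw [this]
      simp only [h1, h2]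
      rw [if_pos (by omega : 0 < y i + 1)]
    have hrange : ∀ x, x ∉ Set.range ι → H i x = 0 := by
      intro x hx
      by_contra hne
      have hxi : 0 < x i := by
        by_contra hle
        exact hne (by simp [hH, hle])
      refine hx ⟨Function.update x i (x i - 1), ?_⟩
      funext j
      rcases eq_or_ne j i with rfl | hji
      · simp only [hι, Function.update_idem, Function.update_self]
        omega
      · simp only [hι, Function.update_of_ne hji]
    have hsumm : Summable (H i) := by
      rw [← hinj.summable_iff hrange]
      have : H i ∘ ι = fun y => lam i * f y := funext hcomp
      rw [this]
      exact hG.mul_left _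
    have hsupp : Function.support (H i) ⊆ Set.range ι := by
      intro x hx
      by_contra hc
      exact hx (hrange x hc)
    have htsum : ∑' x, H i x = lam i * G := by
      rw [← hinj.tsum_eq hsupp, tsum_congr hcomp, tsum_mul_left]
    exact ⟨hsumm, htsum⟩
  have stepB : ∑' x, f x * Mden x = (∑ i, lam i) * G := by
    calc ∑' x, f x * Mden x = ∑' x, ∑ i, H i x := tsum_congr hpoint
      _ = ∑ i, ∑' x, H i x := Summable.tsum_finsetSum (fun i _ => (hshift i).1)
      _ = ∑ i, lam i * G := Finset.sum_congr rfl fun i _ => (hshift i).2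
      _ = (∑ i, lam i) * G := by rw [Finset.sum_mul]
  -- combine
  have hmain : ∑ k, μ k * Gk k = ((∑ k, μ k) - ∑ i, lam i) * G := by
    have h3 : ∑ k, μ k * (G - Gk k) = (∑ i, lam i) * G := by
      rw [← stepB, ← stepA]
      refine Finset.sum_congr rfl fun k _ => ?_
      rw [← hdecomp k]; ring
    have h4 : ∑ k, μ k * (G - Gk k) = (∑ k, μ k) * G - ∑ k, μ k * Gk k := by
      rw [Finset.sum_mul, ← Finset.sum_sub_distrib]
      exact Finset.sum_congr rfl fun k _ => by ring
    rw [h4] at h3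
    linarith [h3]
  have hGkpos : ∀ k, 0 < Gk k := by
    intro k
    have hmem0 : ((fun _ => 0 : I → ℕ)) ∈ S k := fun i _ => rfl
    have h5 : f ((⟨fun _ => 0, hmem0⟩ : S k) : I → ℕ) ≤ Gk k :=
      Summable.le_tsum (hsub k) ⟨fun _ => 0, hmem0⟩ (fun j _ => hf0 j)
    rw [hfzero] at h5
    linarith
  have hpos : 0 < ∑ k, μ k * Gk k :=
    Finset.sum_pos (fun k _ => mul_pos (hμ k) (hGkpos k)) Finset.univ_nonempty
  have hlt : (∑ i, lam i) < ∑ k, μ k := by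
    nlinarith [hmain, hpos, hGpos]
  constructor
  · have : ∑ k, μ k * (G⁻¹ * Gk k) = G⁻¹ * ∑ k, μ k * Gk k := by
      rw [Finset.mul_sum]
      exact Finset.sum_congr rfl fun k _ => by ring
    calc ∑ k, μ k * (G⁻¹ * ∑' x : {x : I → ℕ // ∀ i, k ∈ Ka i → x i = 0},
            Phi μ Ka x.1 * ∏ i, lam i ^ x.1 i)
        = ∑ k, μ k * (G⁻¹ * Gk k) := rfl
      _ = G⁻¹ * ∑ k, μ k * Gk k := this
      _ = G⁻¹ * (((∑ k, μ k) - ∑ i, lam i) * G) := by rw [hmain]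
      _ = (∑ k, μ k) - ∑ i, lam i := by field_simp
  · exact hlt
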